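/- Let n ≥ 5 and let W_n be the wheel graph on n vertices. Then T_2(W_n) = 2 and B_2(W_n) = 1; that is, the minimum number of tile types over all pots P with W_n ∈ C(P) and m_P = n is 2, and the minimum number of bond-edge types over such pots is 1. -/

import Mathlib

/-!
Basic framework for flexible-tile DNA self-assembly.

Bond-edge types are elements of `Fin m`.  A cohesive end is either unhatted
(`Sum.inl a`) or hatted (`Sum.inr a`).  A tile is a finite multiset of cohesive
ends, and a pot is a finite set of tiles.
-/

/-- A tile over the bond-edge alphabet `Fin m`. -/
abbrev Tile (m : ℕ) : Type := Multiset (Fin m ⊕ Fin m)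

/-- A pot: a finite set of tiles over the alphabet `Fin m`. -/
abbrev Pot (m : ℕ) : Type := Finset (Tile m)

/-- A finite multigraph (nonempty finite vertex set, finite edge set; loops and
parallel edges allowed), edges recorded by their unordered pair of endpoints. -/
structure Multigraph where
  V : Type
  E : Type
  [fintypeV : Fintype V]
  [decEqV : DecidableEq V]
  [nonemptyV : Nonempty V]
  [fintypeE : Fintype E]
  ends : E → Sym2 V

attribute [instance] Multigraph.fintypeV Multigraph.decEqV
  Multigraph.nonemptyV Multigraph.fintypeE

/-- The order (number of vertices) of a multigraph. -/
def Multigraph.order (G : Multigraph) : ℕ := Fintype.card G.V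

/-- An assembly of `G` from tiles over `Fin m`: each edge gets an orientation
(an ordered pair of vertices compatible with its endpoints) and a bond-edge type. -/
structure Assembly (m : ℕ) (G : Multigraph) where
  orient : G.E → G.V × G.V
  label : G.E → Fin m
  orient_ends : ∀ e : G.E, G.ends e = s((orient e).1, (orient e).2)

/-- The tile of a vertex `v` under an assembly: one unhatted `a` for each edge
labeled `a` oriented out of `v`, one hatted `a` for each edge labeled `a`
oriented into `v`. -/
def Assembly.tileOf {m : ℕ} {G : Multigraph} (A : Assembly m G) (v : G.V) : Tile m :=
  (Finset.univ : Finset G.E).val.bind fun e =>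
    (if (A.orient e).1 = v then {Sum.inl (A.label e)} else 0) +
    (if (A.orient e).2 = v then {Sum.inr (A.label e)} else 0)

/-- `G` is realized by the pot `P`: there is an assembly of `G` all of whose
vertex tiles belong to `P`. -/
def Realizes {m : ℕ} (P : Pot m) (G : Multigraph) : Prop :=
  ∃ A : Assembly m G, ∀ v : G.V, A.tileOf v ∈ P

/-- `C(P)`: the class of multigraphs realized by `P`. -/
def CSet {m : ℕ} (P : Pot m) : Set Multigraph := {G | Realizes P G}

/-- `m_P`: the minimum order of a multigraph realized by `P`. -/
noncomputable def mP {m : ℕ} (P : Pot m) : ℕ :=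
  sInf {n | ∃ G ∈ CSet P, G.order = n}

/-- `C_min(P)`: the multigraphs realized by `P` of minimum order. -/
def Cmin {m : ℕ} (P : Pot m) : Set Multigraph :=
  {G ∈ CSet P | G.order = mP P}

/-- An isomorphism of multigraphs. -/
structure MultigraphIso (G H : Multigraph) where
  vEquiv : G.V ≃ H.V
  eEquiv : G.E ≃ H.E
  ends_eq : ∀ e : G.E, H.ends (eEquiv e) = (G.ends e).map vEquiv

/-- Two multigraphs are isomorphic. -/
def Isomorphic (G H : Multigraph) : Prop := Nonempty (MultigraphIso G H)

/-- Scenario 1: minimum number of tile types over all pots realizing `G`. -/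
noncomputable def T1 (G : Multigraph) : ℕ :=
  sInf {c | ∃ m : ℕ, ∃ P : Pot m, Realizes P G ∧ P.card = c}

/-- Scenario 1: minimum number of bond-edge types over all pots realizing `G`. -/
noncomputable def B1 (G : Multigraph) : ℕ :=
  sInf {m | ∃ P : Pot m, Realizes P G}

/-- Scenario 2: minimum number of tile types over pots `P` with `G ∈ C(P)` and
`m_P = |V(G)|`. -/
noncomputable def T2 (G : Multigraph) : ℕ :=
  sInf {c | ∃ m : ℕ, ∃ P : Pot m, Realizes P G ∧ mP P = G.order ∧ P.card = c}

/-- Scenario 2: minimum number of bond-edge types over pots `P` with `G ∈ C(P)`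
and `m_P = |V(G)|`. -/
noncomputable def B2 (G : Multigraph) : ℕ :=
  sInf {m | ∃ P : Pot m, Realizes P G ∧ mP P = G.order}

/-- Scenario 3: minimum number of tile types over pots `P` with `C_min(P)`
consisting exactly of the multigraphs isomorphic to `G`. -/
noncomputable def T3 (G : Multigraph) : ℕ :=
  sInf {c | ∃ m : ℕ, ∃ P : Pot m, Cmin P = {H | Isomorphic H G} ∧ P.card = c}

/-- Scenario 3: minimum number of bond-edge types over pots `P` with `C_min(P)`
consisting exactly of the multigraphs isomorphic to `G`. -/
noncomputable def B3 (G : Multigraph) : ℕ :=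
  sInf {m | ∃ P : Pot m, Cmin P = {H | Isomorphic H G}}

/-- The degree of a vertex (a loop contributes 2). -/
def Multigraph.degree (G : Multigraph) (v : G.V) : ℕ :=
  ∑ e : G.E, (if v ∈ G.ends e then (if (G.ends e).IsDiag then 2 else 1) else 0)

/-- `av(G)`: the number of distinct vertex degrees in `G`. -/
def av (G : Multigraph) : ℕ := (Finset.univ.image G.degree).card

/-- `ev(G)`: the number of distinct even vertex degrees in `G`. -/
def ev (G : Multigraph) : ℕ :=
  ((Finset.univ.image G.degree).filter (fun d => Even d)).card

/-- `ov(G)`: the number of distinct odd vertex degrees in `G`. -/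
def ov (G : Multigraph) : ℕ :=
  ((Finset.univ.image G.degree).filter (fun d => Odd d)).card

/-- `z i t`: the net number of cohesive ends of type `i` on tile `t`
(unhatted count minus hatted count). -/
def zval {m : ℕ} (i : Fin m) (t : Tile m) : ℤ :=
  (t.count (Sum.inl i) : ℤ) - (t.count (Sum.inr i) : ℤ)

/-- The wheel graph on `n` vertices: the hub is `none`; the outer-cycle
vertices are `some i` for `i : Fin (n-1)`.  Edge `Sum.inl i` is the spoke from
the hub to `some i`; edge `Sum.inr i` is the outer-cycle edge from `some i` to
`some ((i+1) mod (n-1))`. -/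
def wheel (n : ℕ) : Multigraph where
  V := Option (Fin (n - 1))
  E := Fin (n - 1) ⊕ Fin (n - 1)
  ends e :=
    match e with
    | Sum.inl i => s((none : Option (Fin (n - 1))), some i)
    | Sum.inr i => s(some i,
        some ⟨(i.val + 1) % (n - 1), Nat.mod_lt _ (by have := i.isLt; omega)⟩)

/-- The cycle graph on `n` vertices (vertices `none, some 0, …, some (n-2)`,
edge `k` joining the `k`-th and `(k+1 mod n)`-th vertices in this order). -/
def cycleVtx (n : ℕ) (k : Fin n) : Option (Fin (n - 1)) :=
  if h : k.val = 0 then none else some ⟨k.val - 1, by have := k.isLt; omega⟩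

def cycleGraph (n : ℕ) : Multigraph where
  V := Option (Fin (n - 1))
  E := Fin n
  ends k := s(cycleVtx n k,
    cycleVtx n ⟨(k.val + 1) % n, Nat.mod_lt _ (by have := k.isLt; omega)⟩)
namespace WheelProof

lemma count_tileOf_inl {m : ℕ} {G : Multigraph} (A : Assembly m G) (v : G.V) (i : Fin m) :
    (A.tileOf v).count (Sum.inl i) =
      ∑ e : G.E, (if (A.orient e).1 = v ∧ A.label e = i then 1 else 0) := by
  rw [Assembly.tileOf, Multiset.count_bind, Finset.sum]
  congr 1
  apply Multiset.map_congr rfl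
  intro e _
  split_ifs with h1 h2 h2 <;>
    simp_all [Multiset.count_singleton, ite_and, eq_comm]

lemma count_tileOf_inr {m : ℕ} {G : Multigraph} (A : Assembly m G) (v : G.V) (i : Fin m) :
    (A.tileOf v).count (Sum.inr i) =
      ∑ e : G.E, (if (A.orient e).2 = v ∧ A.label e = i then 1 else 0) := by
  rw [Assembly.tileOf, Multiset.count_bind, Finset.sum]
  congr 1
  apply Multiset.map_congr rfl
  intro e _
  split_ifs with h1 h2 h2 <;>
    simp_all [Multiset.count_singleton, ite_and, eq_comm]

lemma card_tileOf {m : ℕ} {G : Multigraph} (A : Assembly m G) (v : G.V) :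
    Multiset.card (A.tileOf v) =
      ∑ e : G.E, ((if (A.orient e).1 = v then 1 else 0) + (if (A.orient e).2 = v then 1 else 0)) := by
  rw [Assembly.tileOf, Multiset.card_bind, Finset.sum]
  congr 1
  apply Multiset.map_congr rfl
  intro e _
  by_cases h1 : (A.orient e).1 = v <;> by_cases h2 : (A.orient e).2 = v <;> simp [h1, h2]

lemma sum_zval {m : ℕ} {G : Multigraph} (A : Assembly m G) (i : Fin m) :
    ∑ v : G.V, zval i (A.tileOf v) = 0 := by
  have h1 : ∑ v : G.V, ((A.tileOf v).count (Sum.inl i) : ℤ)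
      = ∑ e : G.E, (if A.label e = i then (1:ℤ) else 0) := by
    simp only [count_tileOf_inl]
    push_cast
    rw [Finset.sum_comm]
    apply Finset.sum_congr rfl
    intro e _
    simp [ite_and, Finset.sum_ite_eq]
  have h2 : ∑ v : G.V, ((A.tileOf v).count (Sum.inr i) : ℤ)
      = ∑ e : G.E, (if A.label e = i then (1:ℤ) else 0) := by
    simp only [count_tileOf_inr]
    push_cast
    rw [Finset.sum_comm]
    apply Finset.sum_congr rfl
    intro e _
    simp [ite_and, Finset.sum_ite_eq]
  simp only [zval, Finset.sum_sub_distrib, h1, h2, sub_self]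

lemma endpoint_contrib {m : ℕ} {G : Multigraph} (A : Assembly m G) (v : G.V) (e : G.E)
    (a b : G.V) (h : G.ends e = s(a, b)) :
    (if (A.orient e).1 = v then 1 else 0) + (if (A.orient e).2 = v then 1 else 0)
      = (if a = v then 1 else 0) + (if b = v then 1 else 0) := by
  have h2 := A.orient_ends e
  rw [h, Sym2.eq_iff] at h2
  rcases h2 with ⟨h1, h2⟩ | ⟨h1, h2⟩ <;> subst h1 <;> subst h2
  · rfl
  · exact add_comm _ _

end WheelProof
namespace WheelProof

variable (n : ℕ)

/-- successor on the outer cycle -/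
def wsucc (i : Fin (n - 1)) : Fin (n - 1) :=
  ⟨(i.val + 1) % (n - 1), Nat.mod_lt _ (by have := i.isLt; omega)⟩

lemma wsucc_eq_add_one (hn : 5 ≤ n) [NeZero (n - 1)] (i : Fin (n - 1)) :
    wsucc n i = i + 1 := by
  apply Fin.ext
  rw [Fin.add_def, Fin.val_one', Nat.mod_eq_of_lt (a := 1) (by omega)]
  rfl

lemma sum_wsucc_eq (hn : 5 ≤ n) (j : Fin (n - 1)) :
    ∑ i : Fin (n - 1), (if wsucc n i = j then 1 else 0) = 1 := by
  haveI : NeZero (n - 1) := ⟨by omega⟩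
  rw [Fintype.sum_equiv (Equiv.addRight (1 : Fin (n-1)))
    (fun i => if wsucc n i = j then 1 else 0) (fun k => if k = j then 1 else 0)
    (fun i => by simp [wsucc_eq_add_one n hn, Equiv.addRight])]
  simp

/-- The wheel assembly: all edges labeled 0, spokes out of the hub, cycle oriented forward. -/
def wAsm : Assembly 1 (wheel n) where
  orient := Sum.elim (fun i => ((none : Option (Fin (n-1))), some i))
    (fun i => (some i, some (wsucc n i)))
  label := fun _ => 0
  orient_ends := by rintro (i | i) <;> rfl

def t1 : Tile 1 := Multiset.replicate (n - 1) (Sum.inl 0)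

def t2 : Tile 1 := {Sum.inl 0, Sum.inr 0, Sum.inr 0}

def wPot : Pot 1 := {t1 n, t2}

lemma t1_ne_t2 (hn : 5 ≤ n) : t1 n ≠ t2 := by
  intro h
  have := congrArg Multiset.card h
  simp [t1, t2] at this
  omega

lemma wPot_card (hn : 5 ≤ n) : (wPot n).card = 2 := by
  rw [wPot, Finset.card_insert_of_notMem (by simp [t1_ne_t2 n hn])]
  rfl

lemma label_eq (e : (wheel n).E) (i : Fin 1) : (wAsm n).label e = i := Subsingleton.elim _ _

lemma sum_wheelE {M : Type*} [AddCommMonoid M] (f : (wheel n).E → M) :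
    ∑ e : (wheel n).E, f e =
      (∑ i : Fin (n-1), f (Sum.inl i)) + ∑ i : Fin (n-1), f (Sum.inr i) :=
  Fintype.sum_sum_type f

lemma tileOf_none : (wAsm n).tileOf none = t1 n := by
  have hl : ∀ e, (wAsm n).label e = 0 := fun e => Subsingleton.elim _ _
  apply Multiset.ext.mpr
  rintro (a | a) <;> rw [Subsingleton.elim a 0]
  · rw [count_tileOf_inl (wAsm n) none 0, sum_wheelE]
    dsimp only [wheel, wAsm, Sum.elim_inl, Sum.elim_inr]
    simp [wAsm, t1, Multiset.count_replicate]
  · rw [count_tileOf_inr (wAsm n) none 0, sum_wheelE]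
    dsimp only [wheel, wAsm, Sum.elim_inl, Sum.elim_inr]
    simp [wAsm, t1, Multiset.count_replicate]

lemma tileOf_some (hn : 5 ≤ n) (j : Fin (n - 1)) : (wAsm n).tileOf (some j) = t2 := by
  have hl : ∀ e, (wAsm n).label e = 0 := fun e => Subsingleton.elim _ _
  apply Multiset.ext.mpr
  rintro (a | a) <;> rw [Subsingleton.elim a 0]
  · rw [count_tileOf_inl (wAsm n) (some j) 0, sum_wheelE]
    dsimp only [wheel, wAsm, Sum.elim_inl, Sum.elim_inr]
    simp only [wheel, wAsm, Sum.elim_inl, Sum.elim_inr, Option.some.injEq, and_true]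
    rw [Finset.sum_ite_eq' Finset.univ j (fun _ => 1)]
    simp [t2]
  · rw [count_tileOf_inr (wAsm n) (some j) 0, sum_wheelE]
    dsimp only [wheel, wAsm, Sum.elim_inl, Sum.elim_inr]
    have hs := sum_wsucc_eq n hn j
    simp only [wheel, wAsm, Sum.elim_inl, Sum.elim_inr, Option.some.injEq, and_true]
    rw [hs, Finset.sum_ite_eq' Finset.univ j (fun _ => 1)]
    simp [t2]

lemma realizes_wheel (hn : 5 ≤ n) : Realizes (wPot n) (wheel n) := by
  refine ⟨wAsm n, ?_⟩
  rintro (_ | j)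
  · rw [tileOf_none]; exact Finset.mem_insert_self _ _
  · rw [tileOf_some n hn]; exact Finset.mem_insert_of_mem (Finset.mem_singleton_self _)

end WheelProof
namespace WheelProof

variable (n : ℕ)

lemma zval_t1 : zval 0 (t1 n) = (n - 1 : ℕ) := by
  simp [zval, t1, Multiset.count_replicate]

lemma zval_t2 : zval 0 t2 = -1 := by
  simp [zval, t2]

lemma order_wheel : (wheel n).order = (n - 1) + 1 := by
  rw [Multigraph.order]
  exact (Fintype.card_option).trans (by rw [Fintype.card_fin])

/-- any graph realized by the wheel pot has at least n vertices -/
lemma order_lower (hn : 5 ≤ n) (G : Multigraph) (hG : Realizes (wPot n) G) :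
    n ≤ G.order := by
  obtain ⟨A, hA⟩ := hG
  classical
  set S : Finset G.V := Finset.univ.filter (fun v => A.tileOf v = t1 n) with hS
  set T : Finset G.V := Finset.univ.filter (fun v => ¬ A.tileOf v = t1 n) with hT
  have hz := sum_zval A 0
  rw [← Finset.sum_filter_add_sum_filter_not Finset.univ (fun v => A.tileOf v = t1 n)] at hz
  have hST : S.card + T.card = Fintype.card G.V := by
    rw [hS, hT, Finset.card_filter_add_card_filter_not, Finset.card_univ]
  have h1 : ∑ v ∈ S, zval 0 (A.tileOf v) = S.card * ((n:ℤ) - 1) := by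
    rw [Finset.sum_congr rfl (fun v hv => ?_), Finset.sum_const, nsmul_eq_mul]
    rw [(Finset.mem_filter.mp hv).2, zval_t1]
    push_cast [Nat.cast_sub (by omega : 1 ≤ n)]
    ring
  have h2 : ∑ v ∈ T, zval 0 (A.tileOf v) = -(T.card : ℤ) := by
    rw [Finset.sum_congr rfl (fun v hv => ?_), Finset.sum_const, nsmul_eq_mul, mul_neg_one]
    have hv' := Finset.mem_filter.mp hv
    have := hA v
    rw [wPot, Finset.mem_insert, Finset.mem_singleton] at this
    rcases this with h | h
    · exact absurd h hv'.2
    · rw [h, zval_t2]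
  rw [h1, h2] at hz
  have hpos : 0 < Fintype.card G.V := Fintype.card_pos
  have hkey' : Fintype.card G.V = n * S.card := by
    have : (Fintype.card G.V : ℤ) = n * S.card := by
      have := hST
      push_cast [← this]
      linarith
    exact_mod_cast this
  have hSpos : 0 < S.card := by
    rcases Nat.eq_zero_or_pos S.card with h | h
    · rw [h, Nat.mul_zero] at hkey'; omega
    · exact h
  rw [Multigraph.order, hkey']
  exact Nat.le_mul_of_pos_right n hSpos

lemma mP_wheel (hn : 5 ≤ n) : mP (wPot n) = (wheel n).order := by
  have hmem : (wheel n).order ∈ {k | ∃ G ∈ CSet (wPot n), G.order = k} :=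
    ⟨wheel n, realizes_wheel n hn, rfl⟩
  apply le_antisymm (Nat.sInf_le hmem)
  apply le_csInf ⟨_, hmem⟩
  rintro k ⟨G, hG, rfl⟩
  calc (wheel n).order = n := by rw [order_wheel]; omega
  _ ≤ G.order := order_lower n hn G hG

end WheelProof
namespace WheelProof

variable (n : ℕ)

lemma opt_ite (a b : Option (Fin (n - 1))) (x y : ℕ) :
    (if (a : (wheel n).V) = b then x else y) = if a = b then x else y := rfl

lemma card_tileOf_none {m : ℕ} (A : Assembly m (wheel n)) :
    Multiset.card (A.tileOf none) = n - 1 := by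
  rw [card_tileOf A none, sum_wheelE]
  rw [Finset.sum_congr rfl (fun i _ => endpoint_contrib A none (Sum.inl i) none (some i) rfl),
    Finset.sum_congr rfl (fun i _ => endpoint_contrib A none (Sum.inr i) (some i) (some (wsucc n i)) rfl)]
  dsimp only [wheel]
  simp

lemma card_tileOf_some (hn : 5 ≤ n) {m : ℕ} (A : Assembly m (wheel n)) (j : Fin (n - 1)) :
    Multiset.card (A.tileOf (some j)) = 3 := by
  rw [card_tileOf A (some j), sum_wheelE]
  rw [Finset.sum_congr rfl (fun i _ => endpoint_contrib A (some j) (Sum.inl i) none (some i) rfl),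
    Finset.sum_congr rfl (fun i _ => endpoint_contrib A (some j) (Sum.inr i) (some i) (some (wsucc n i)) rfl)]
  dsimp only [wheel]
  simp only [reduceCtorEq, Option.some.injEq, if_false, zero_add]
  rw [Finset.sum_add_distrib, sum_wsucc_eq n hn j,
    Finset.sum_ite_eq' Finset.univ j (fun _ => 1)]
  simp

lemma two_le_card (hn : 5 ≤ n) {m : ℕ} (P : Pot m) (hP : Realizes P (wheel n)) :
    2 ≤ P.card := by
  obtain ⟨A, hA⟩ := hP
  have h0 : A.tileOf none ∈ P := hA none
  have hj : A.tileOf (some ⟨0, by omega⟩) ∈ P := hA _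
  have hne : A.tileOf none ≠ A.tileOf (some ⟨0, by omega⟩) := by
    intro h
    have hc := congrArg Multiset.card h
    rw [card_tileOf_none, card_tileOf_some n hn] at hc
    omega
  exact Finset.one_lt_card.mpr ⟨_, h0, _, hj, hne⟩

lemma no_pot_zero (hn : 5 ≤ n) (P : Pot 0) (hP : Realizes P (wheel n)) : False := by
  obtain ⟨A, -⟩ := hP
  exact (A.label (Sum.inl (⟨0, by omega⟩ : Fin (n - 1)))).elim0

end WheelProof

open WheelProof in
/-- For `n ≥ 5`, the wheel graph `W_n` satisfies `T₂(W_n) = 2` and `B₂(W_n) = 1`. -/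
theorem wheel_scenario2 (n : ℕ) (hn : 5 ≤ n) :
    T2 (wheel n) = 2 ∧ B2 (wheel n) = 1 := by
  constructor
  · have hmem : 2 ∈ {c | ∃ m : ℕ, ∃ P : Pot m, Realizes P (wheel n) ∧
        mP P = (wheel n).order ∧ P.card = c} :=
      ⟨1, wPot n, realizes_wheel n hn, mP_wheel n hn, wPot_card n hn⟩
    refine le_antisymm (Nat.sInf_le hmem) (le_csInf ⟨2, hmem⟩ ?_)
    rintro c ⟨m, P, hreal, -, rfl⟩
    exact two_le_card n hn P hreal
  · have hmem : 1 ∈ {m | ∃ P : Pot m, Realizes P (wheel n) ∧ mP P = (wheel n).order} :=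
      ⟨wPot n, realizes_wheel n hn, mP_wheel n hn⟩
    have hInf := Nat.sInf_mem (⟨1, hmem⟩ :
      {m | ∃ P : Pot m, Realizes P (wheel n) ∧ mP P = (wheel n).order}.Nonempty)
    have hle : B2 (wheel n) ≤ 1 := Nat.sInf_le hmem
    rcases Nat.lt_or_ge (B2 (wheel n)) 1 with h | h
    · exfalso
      have h0 : B2 (wheel n) = 0 := by omega
      rw [B2] at h0
      rw [h0] at hInf
      obtain ⟨P, hP, -⟩ := hInf
      exact no_pot_zero n hn P hP
    · omega
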